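/- arXiv:1904.04487 — 5 statements merged into one kernel-verified Lean document; each statement's English description precedes it below -/
import Mathlib

section
/- Let G be a finite abelian group and E a nonempty subset of G. Then there exists a subset B of the character group of G with |B| = |E| such that the restrictions to E of the characters in B form a basis of L²(E). -/
theorem stmt_1 {G : Type*} [AddCommGroup G] [Fintype G]
    (E : Finset G) (hE : E.Nonempty) :
    ∃ B : Finset (AddChar G ℂ), B.card = E.card ∧
      LinearIndependent ℂ (fun χ : B => fun x : E => χ.1 x.1) ∧
      Submodule.span ℂ (Set.range (fun χ : B => fun x : E => χ.1 x.1)) = ⊤ := by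
  classical
  -- restriction map
  let π : (G → ℂ) →ₗ[ℂ] (E → ℂ) := LinearMap.funLeft ℂ ℂ (fun x : E => (x : G))
  have hπ : Function.Surjective π := by
    intro f
    refine ⟨fun g => if hg : g ∈ E then f ⟨g, hg⟩ else 0, ?_⟩
    funext x
    simp [π, LinearMap.funLeft, x.2]
  let r : AddChar G ℂ → (E → ℂ) := fun χ x => χ x.1
  have hr : ∀ χ, r χ = π (⇑χ) := fun χ => rfl
  -- restricted characters span everything
  have hspan : Submodule.span ℂ (Set.range r) = ⊤ := by
    have h1 : Set.range r = π '' Set.range ((⇑) : AddChar G ℂ → G → ℂ) := by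
      ext f
      constructor
      · rintro ⟨χ, rfl⟩; exact ⟨⇑χ, ⟨χ, rfl⟩, (hr χ).symm⟩
      · rintro ⟨g, ⟨χ, rfl⟩, rfl⟩; exact ⟨χ, hr χ⟩
    rw [h1, ← Submodule.map_span]
    have h2 : Submodule.span ℂ (Set.range ((⇑) : AddChar G ℂ → G → ℂ)) = ⊤ := by
      have := (AddChar.complexBasis G).span_eq
      rwa [AddChar.coe_complexBasis] at this
    rw [h2, Submodule.map_top, LinearMap.range_eq_top.2 hπ]
  obtain ⟨b, hbsub, hbspan, hbind⟩ := exists_linearIndependent ℂ (Set.range r)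
  rw [hspan] at hbspan
  have hbfin : b.Finite := (Set.finite_range r).subset hbsub
  haveI : Fintype b := hbfin.fintype
  -- choose preimage characters
  choose g hg using fun f : b => hbsub f.2
  have hginj : Function.Injective g := fun f₁ f₂ h => by
    apply Subtype.ext; rw [← hg f₁, ← hg f₂, h]
  let B : Finset (AddChar G ℂ) := Finset.image g Finset.univ
  have hrB : ∀ χ : B, r χ.1 ∈ b := by
    rintro ⟨χ, hχ⟩
    simp only [B, Finset.mem_image] at hχ
    obtain ⟨f, -, rfl⟩ := hχ
    rw [hg f]; exact f.2
  -- the equivalence B ≃ b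
  let e : B → b := fun χ => ⟨r χ.1, hrB χ⟩
  have heinj : Function.Injective e := by
    rintro ⟨χ₁, h₁⟩ ⟨χ₂, h₂⟩ h
    simp only [B, Finset.mem_image] at h₁ h₂
    obtain ⟨f₁, -, rfl⟩ := h₁
    obtain ⟨f₂, -, rfl⟩ := h₂
    have : r (g f₁) = r (g f₂) := congrArg Subtype.val h
    rw [hg f₁, hg f₂] at this
    exact congrArg (fun f => (⟨g f, by simp [B]⟩ : B)) (Subtype.ext this)
  have hkey : (fun χ : B => fun x : E => χ.1 x.1) = (↑) ∘ e := rfl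
  -- basis of E → ℂ indexed by b
  have hbasis : Module.finrank ℂ (E → ℂ) = Fintype.card b := by
    rw [Module.finrank_eq_card_basis (Module.Basis.mk hbind (by rw [Subtype.range_coe, hbspan]))]
  have hcard : B.card = E.card := by
    have h1 : B.card = Fintype.card b := by
      rw [Finset.card_image_of_injective _ hginj, Finset.card_univ]
    rw [h1, ← hbasis, Module.finrank_pi, Fintype.card_coe]
  refine ⟨B, hcard, ?_, ?_⟩
  · rw [hkey]
    exact hbind.comp e heinj
  · rw [hkey, Set.range_comp]
    have hesurj : Function.Surjective e := by
      intro f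
      refine ⟨⟨g f, by simp [B]⟩, ?_⟩
      exact Subtype.ext (hg f)
    have : Set.range e = Set.univ := Set.range_eq_univ.2 hesurj
    rw [this, Set.image_univ, Subtype.range_coe, hbspan]
end

section
/- A nonzero sum of N roots of unity, each a 2m-th root of unity, has absolute value at least N^(1−φ(m)). -/
open Complex NumberField Polynomial

lemma abs_one_of_pow {x : ℂ} {n : ℕ} (hn : n ≠ 0) (h : x ^ n = 1) : ‖x‖ = 1 := by
  have h1 : ‖x‖ ^ n = 1 := by
    rw [← norm_pow, h, norm_one]
  have h0 : 0 ≤ ‖x‖ := norm_nonneg x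
  rcases (pow_eq_one_iff_cases).mp h1 with h | h | h
  · omega
  · exact h
  · nlinarith [h.1]

lemma real_pow_eq_one {x : ℝ} {n : ℕ} (hn : n ≠ 0) (h0 : 0 ≤ x) (h : x ^ n = 1) : x = 1 := by
  rcases (pow_eq_one_iff_cases).mp h with h | h | h
  · omega
  · exact h
  · nlinarith [h.1]

lemma aux {m N : ℕ} (hm : 2 ≤ m) (f : Fin N → ℂ)
    (hf : ∀ i, f i ^ (2 * m) = 1) (hsum : ∑ i, f i ≠ 0) :
    1 ≤ ‖∑ i, f i‖ ^ 2 * (N : ℝ) ^ (Nat.totient (2 * m) - 2) := by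
  classical
  set n : ℕ+ := ⟨2 * m, by positivity⟩ with hn
  have hn2m : (n : ℕ) = 2 * m := rfl
  have hn4 : 4 ≤ (n : ℕ) := by omega
  have hn0 : (n : ℕ) ≠ 0 := by omega
  haveI : NeZero ((n : ℕ)) := ⟨hn0⟩
  haveI : NeZero (((n : ℕ) : ℚ)) := ⟨by exact_mod_cast hn0⟩
  set ω : ℂ := Complex.exp (2 * Real.pi * Complex.I / (n : ℕ)) with hωdef
  have hω : IsPrimitiveRoot ω (n : ℕ) := Complex.isPrimitiveRoot_exp _ hn0
  choose a ha_lt ha using fun i => hω.eq_pow_of_pow_eq_one (hf i)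
  set K := CyclotomicField n ℚ with hK
  haveI : IsCyclotomicExtension {(n : ℕ)} ℚ K :=
    CyclotomicField.isCyclotomicExtension (n := (n : ℕ)) (K := ℚ)
  haveI : NumberField K := IsCyclotomicExtension.numberField {(n : ℕ)} ℚ K
  have hirr : Irreducible (cyclotomic n ℚ) := cyclotomic.irreducible_rat n.pos
  set ζ : K := IsCyclotomicExtension.zeta n ℚ K with hζdef
  have hζ : IsPrimitiveRoot ζ n := IsCyclotomicExtension.zeta_spec n ℚ K
  set z : K := ∑ i, ζ ^ a i with hz
  have hωmem : ω ∈ primitiveRoots (n : ℕ) ℂ := (mem_primitiveRoots n.pos).mpr hω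
  set σ₀ : K →ₐ[ℚ] ℂ := (hζ.embeddingsEquivPrimitiveRoots ℂ hirr).symm ⟨ω, hωmem⟩ with hσ₀def
  have hσ₀ζ : σ₀ ζ = ω := by
    have h1 := hζ.embeddingsEquivPrimitiveRoots_apply_coe ℂ hirr σ₀
    rw [hσ₀def, Equiv.apply_symm_apply] at h1
    exact h1.symm
  have hσ₀z : σ₀ z = ∑ i, f i := by
    rw [hz, map_sum]
    refine Finset.sum_congr rfl fun i _ => ?_
    rw [map_pow, hσ₀ζ, ha]
  have hz0 : z ≠ 0 := by
    intro h
    exact hsum (by rw [← hσ₀z, h, map_zero])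
  -- the norm of z is a nonzero integer
  have hint : IsIntegral ℤ z := by
    refine IsIntegral.sum _ fun i _ => IsIntegral.pow ?_ _
    exact hζ.isIntegral n.pos
  obtain ⟨q, hq⟩ := IsIntegrallyClosed.isIntegral_iff.mp (Algebra.isIntegral_norm ℚ hint)
  have hq0 : q ≠ 0 := by
    intro h
    rw [h] at hq
    simp only [map_zero] at hq
    exact hz0 ((Algebra.norm_eq_zero_iff).mp hq.symm)
  have hnorm1 : (1 : ℚ) ≤ |Algebra.norm ℚ z| := by
    rw [← hq]
    have h1 : (1 : ℤ) ≤ |q| := Int.one_le_abs hq0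
    have : ((1:ℤ) : ℚ) ≤ ((|q| : ℤ) : ℚ) := by exact_mod_cast h1
    simpa using this
  -- the distinguished infinite place
  set w₀ : InfinitePlace K := InfinitePlace.mk (σ₀ : K →+* ℂ) with hw₀def
  have hw₀z : w₀ z = ‖∑ i, f i‖ := by
    rw [hw₀def, InfinitePlace.apply]
    exact congrArg (‖·‖) hσ₀z
  have hmult : InfinitePlace.mult w₀ = 2 := by
    rw [InfinitePlace.mult, if_neg]
    intro hre
    rw [hw₀def, InfinitePlace.isReal_mk_iff] at hre
    have hconj : (starRingEnd ℂ) (σ₀ ζ) = σ₀ ζ := by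
      have h2 := ComplexEmbedding.isReal_iff.mp hre
      exact RingHom.congr_fun h2 ζ
    rw [hσ₀ζ] at hconj
    have habs : ‖ω‖ = 1 := abs_one_of_pow hn0 (hω.pow_eq_one)
    have hω2 : ω ^ 2 = 1 := by
      have hωne : ω ≠ 0 := hω.ne_zero hn0
      have hinv : ω⁻¹ = ω := by rw [Complex.inv_eq_conj habs, hconj]
      have h3 := mul_inv_cancel₀ hωne
      rw [hinv] at h3
      rw [pow_two, h3]
    have hdvd : (n : ℕ) ∣ 2 := hω.dvd_of_pow_eq_one 2 hω2
    have := Nat.le_of_dvd (by norm_num) hdvd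
    omega
  -- all places are bounded by N
  have hwz_nonneg : ∀ w : InfinitePlace K, 0 ≤ w z := fun w => w.1.nonneg z
  have hwle : ∀ w : InfinitePlace K, w z ≤ (N : ℝ) := by
    intro w
    have h1 : w z ≤ ∑ i, w (ζ ^ a i) := w.1.sum_le _ _
    have h2 : ∀ i : Fin N, w (ζ ^ a i) = 1 := by
      intro i
      rw [map_pow]
      have hwζ : w ζ = 1 := by
        refine real_pow_eq_one hn0 (w.1.nonneg ζ) ?_
        rw [← map_pow, hζ.pow_eq_one, map_one]
      rw [hwζ, one_pow]
    calc w z ≤ ∑ i, w (ζ ^ a i) := h1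
      _ = (N : ℝ) := by simp [h2]
  -- product formula
  have hprod := InfinitePlace.prod_eq_abs_norm z
  have hsplit : ∏ w : InfinitePlace K, (w z) ^ InfinitePlace.mult w
      = (w₀ z) ^ 2 * ∏ w ∈ Finset.univ.erase w₀, (w z) ^ InfinitePlace.mult w := by
    rw [← hmult, ← Finset.mul_prod_erase Finset.univ _ (Finset.mem_univ w₀)]
  have hNnn : (0:ℝ) ≤ N := Nat.cast_nonneg N
  have herase_le : ∏ w ∈ Finset.univ.erase w₀, (w z) ^ InfinitePlace.mult w
      ≤ (N : ℝ) ^ (∑ w ∈ Finset.univ.erase w₀, InfinitePlace.mult w) := by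
    rw [← Finset.prod_pow_eq_pow_sum]
    exact Finset.prod_le_prod (fun w _ => pow_nonneg (hwz_nonneg w) _)
      (fun w _ => pow_le_pow_left₀ (hwz_nonneg w) (hwle w) _)
  have hsum_mult : ∑ w ∈ Finset.univ.erase w₀, InfinitePlace.mult w
      = Nat.totient (2 * m) - 2 := by
    have h1 : ∑ w : InfinitePlace K, InfinitePlace.mult w = Module.finrank ℚ K :=
      InfinitePlace.sum_mult_eq
    have h2 : Module.finrank ℚ K = Nat.totient (2 * m) := by
      rw [IsCyclotomicExtension.finrank K hirr, hn2m]
    have h3 := Finset.add_sum_erase Finset.univ InfinitePlace.mult (Finset.mem_univ w₀)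
    omega
  have hNpow_nonneg : (0:ℝ) ≤ (N : ℝ) ^ (Nat.totient (2 * m) - 2) := by positivity
  calc (1:ℝ) ≤ ((|Algebra.norm ℚ z| : ℚ) : ℝ) := by exact_mod_cast hnorm1
    _ = ∏ w : InfinitePlace K, (w z) ^ InfinitePlace.mult w := by
        rw [hprod]
    _ = (w₀ z) ^ 2 * ∏ w ∈ Finset.univ.erase w₀, (w z) ^ InfinitePlace.mult w := hsplit
    _ ≤ (w₀ z) ^ 2 * (N : ℝ) ^ (Nat.totient (2 * m) - 2) := by
        rw [← hsum_mult]
        exact mul_le_mul_of_nonneg_left herase_le (by positivity)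
    _ = ‖∑ i, f i‖ ^ 2 * (N : ℝ) ^ (Nat.totient (2 * m) - 2) := by rw [hw₀z]

theorem stmt_10 {m N : ℕ} (hm : 0 < m) (f : Fin N → ℂ)
    (hf : ∀ i, f i ^ (2 * m) = 1) (hsum : ∑ i, f i ≠ 0) :
    (N : ℝ) ^ ((1 : ℤ) - (Nat.totient m : ℤ)) ≤ ‖∑ i, f i‖ := by
  classical
  rcases Nat.eq_zero_or_pos N with hN | hN0
  · exfalso; apply hsum; subst hN; simp
  have hN1 : (1:ℝ) ≤ (N:ℝ) := by exact_mod_cast hN0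
  have ht1 : 1 ≤ m.totient := Nat.totient_pos.mpr hm
  have hexp : (1 : ℤ) - (m.totient : ℤ) = -((m.totient - 1 : ℕ) : ℤ) := by
    rw [Nat.cast_sub ht1]; push_cast; ring
  rw [hexp, zpow_neg, zpow_natCast]
  set A := ‖∑ i, f i‖ with hA
  have hAnn : 0 ≤ A := norm_nonneg _
  set b : ℝ := (N : ℝ) ^ (m.totient - 1) with hb
  have hb1 : (1:ℝ) ≤ b := one_le_pow₀ hN1
  have hbpos : (0:ℝ) < b := lt_of_lt_of_le one_pos hb1
  have hkey : (1:ℝ) ≤ A ^ 2 * b ^ 2 := by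
    rcases Nat.lt_or_ge m 2 with hm2 | hm2
    · -- m = 1
      have hm1 : m = 1 := by omega
      subst hm1
      have hb' : b = (N:ℝ) ^ (0:ℕ) := by rw [hb, Nat.totient_one]
      have hA1 : (1:ℝ) ≤ A := by
        have hpm : ∀ i, f i = 1 ∨ f i = -1 := by
          intro i
          have := hf i
          norm_num at this
          exact this
        set g : Fin N → ℤ := fun i => if f i = 1 then 1 else -1 with hg
        have hfg : ∀ i, f i = (g i : ℂ) := by
          intro i
          rcases hpm i with h | h <;> norm_num [hg, h]
        have hsg : ∑ i, f i = ((∑ i, g i : ℤ) : ℂ) := by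
          rw [Finset.sum_congr rfl fun i _ => hfg i]
          push_cast
          rfl
        have hgne : (∑ i, g i) ≠ 0 := by
          intro h
          apply hsum
          rw [hsg, h, Int.cast_zero]
        rw [hA, hsg, Complex.norm_intCast]
        exact_mod_cast Int.one_le_abs hgne
      have h1 : (1:ℝ) ≤ A * b := by nlinarith
      calc (1:ℝ) ≤ (A * b) ^ 2 := one_le_pow₀ h1
        _ = A ^ 2 * b ^ 2 := mul_pow A b 2
    · -- m ≥ 2
      have haux := aux hm2 f hf hsum
      have htot : Nat.totient (2 * m) ≤ 2 * Nat.totient m := by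
        rcases Nat.even_or_odd m with he | ho
        · have h2 : (2:ℕ) ∣ m := he.two_dvd
          rw [Nat.totient_mul_of_prime_of_dvd Nat.prime_two h2]
        · have hco : Nat.Coprime 2 m := Nat.coprime_two_left.mpr ho
          rw [Nat.totient_mul hco, Nat.totient_two, one_mul]
          omega
      have hpowle : (N:ℝ) ^ (Nat.totient (2 * m) - 2) ≤ b ^ 2 := by
        rw [hb, ← pow_mul]
        exact pow_le_pow_right₀ hN1 (by omega)
      calc (1:ℝ) ≤ A ^ 2 * (N:ℝ) ^ (Nat.totient (2 * m) - 2) := haux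
        _ ≤ A ^ 2 * b ^ 2 := mul_le_mul_of_nonneg_left hpowle (by positivity)
  have hAb : (1:ℝ) ≤ A * b := by nlinarith [mul_nonneg hAnn (le_of_lt hbpos)]
  have := (div_le_iff₀ hbpos).mpr hAb
  rwa [one_div] at this
end

section
/- Let n > 1 and let σ_1 ≤ ... ≤ σ_n be positive reals with σ_1² + ... + σ_n² = n². Let ρ = σ_n²/σ_1² and D = σ_1σ_2⋯σ_n. Then D ≤ (2√ρ/(ρ+1))·n^(n/2). Consequently ρ < 4n^n/D². -/
open Finset in
private lemma amgm {n : ℕ} (hn : 0 < n) (z : Fin n → ℝ) (hz : ∀ i, 0 ≤ z i) :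
    ∏ i, z i ≤ ((∑ i, z i) / n) ^ n := by
  have h := Real.geom_mean_le_arith_mean (univ : Finset (Fin n)) (fun _ => 1) z
    (fun _ _ => zero_le_one) (by simp; exact_mod_cast hn) (fun i _ => hz i)
  simp only [Real.rpow_one, one_mul, Finset.sum_const, card_univ, Fintype.card_fin,
    nsmul_eq_mul, mul_one] at h
  have hP : (0:ℝ) ≤ ∏ i, z i := Finset.prod_nonneg fun i _ => hz i
  have h2 : ((∏ i, z i) ^ ((n:ℝ)⁻¹)) ^ (n:ℕ) ≤ ((∑ i, z i) / n) ^ (n:ℕ) :=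
    pow_le_pow_left₀ (Real.rpow_nonneg hP _) h _
  rwa [← Real.rpow_natCast ((∏ i, z i) ^ ((n:ℝ)⁻¹)), ← Real.rpow_mul hP,
    inv_mul_cancel₀ (by exact_mod_cast hn.ne'), Real.rpow_one] at h2

theorem stmt_12 {n : ℕ} (hn : 1 < n) (σ : Fin n → ℝ)
    (hmono : Monotone σ) (hpos : ∀ i, 0 < σ i)
    (hsum : ∑ i, σ i ^ 2 = (n : ℝ) ^ 2) :
    (∏ i, σ i) ≤ (2 * Real.sqrt (σ ⟨n - 1, by omega⟩ ^ 2 / σ ⟨0, by omega⟩ ^ 2) /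
        (σ ⟨n - 1, by omega⟩ ^ 2 / σ ⟨0, by omega⟩ ^ 2 + 1)) * (n : ℝ) ^ ((n : ℝ) / 2) ∧
      σ ⟨n - 1, by omega⟩ ^ 2 / σ ⟨0, by omega⟩ ^ 2 <
        4 * (n : ℝ) ^ n / (∏ i, σ i) ^ 2 := by
  classical
  set i0 : Fin n := ⟨0, by omega⟩ with hi0
  set i1 : Fin n := ⟨n - 1, by omega⟩ with hi1
  have hne : i1 ≠ i0 := by
    simp only [hi0, hi1, Ne, Fin.mk.injEq]; omega
  set a : ℝ := σ i0 ^ 2 with ha_def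
  set b : ℝ := σ i1 ^ 2 with hb_def
  have ha : 0 < a := pow_pos (hpos i0) 2
  have hb : 0 < b := pow_pos (hpos i1) 2
  have hab : 0 < a + b := by linarith
  set x : Fin n → ℝ := fun i => σ i ^ 2 with hx_def
  set m : ℝ := (a + b) / 2 with hm_def
  have hm : 0 < m := by rw [hm_def]; linarith
  set y : Fin n → ℝ := Function.update (Function.update x i1 m) i0 m with hy_def
  have hi1mem : i1 ∈ (Finset.univ : Finset (Fin n)).erase i0 :=
    Finset.mem_erase.2 ⟨hne, Finset.mem_univ _⟩
  have e0 : x i0 = a := rfl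
  have e1 : x i1 = b := rfl
  -- sums
  have hsy : ∑ i, y i = (n:ℝ) ^ 2 := by
    rw [hy_def, Finset.sum_update_of_mem (Finset.mem_univ i0),
      Finset.sdiff_singleton_eq_erase, Finset.sum_update_of_mem hi1mem,
      Finset.sdiff_singleton_eq_erase, ← hsum,
      ← Finset.add_sum_erase _ x (Finset.mem_univ i0), ← Finset.add_sum_erase _ x hi1mem,
      e0, e1, hm_def]
    ring
  -- products
  have hprod : (∏ i, x i) * m ^ 2 = a * b * ∏ i, y i := by
    have hy2 : ∏ i, y i = m * (m * ∏ i ∈ (Finset.univ.erase i0).erase i1, x i) := by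
      rw [hy_def, Finset.prod_update_of_mem (Finset.mem_univ i0),
        Finset.sdiff_singleton_eq_erase, Finset.prod_update_of_mem hi1mem,
        Finset.sdiff_singleton_eq_erase]
    have hx2 : ∏ i, x i = a * (b * ∏ i ∈ (Finset.univ.erase i0).erase i1, x i) := by
      rw [← Finset.mul_prod_erase _ x (Finset.mem_univ i0), ← Finset.mul_prod_erase _ x hi1mem,
        e0, e1]
    rw [hy2, hx2]; ring
  have hnpos : (0:ℝ) < n := by exact_mod_cast Nat.lt_of_lt_of_le Nat.zero_lt_one hn.le
  have hN : (0:ℝ) < (n:ℝ) ^ n := by positivity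
  -- AM-GM on y
  have hy_nonneg : ∀ i, 0 ≤ y i := by
    intro i
    rw [hy_def]
    rcases eq_or_ne i i0 with rfl | h0
    · simp [hm.le]
    rw [Function.update_of_ne h0]
    rcases eq_or_ne i i1 with rfl | h1
    · simp [hm.le]
    rw [Function.update_of_ne h1]
    exact (pow_pos (hpos i) 2).le
  have hamgm : ∏ i, y i ≤ (n:ℝ) ^ n := by
    have := amgm (by omega) y hy_nonneg
    rwa [hsy, sq, mul_div_assoc, div_self hnpos.ne', mul_one] at this
  -- key bound on ∏ x
  have hxpos : (0:ℝ) < ∏ i, x i := Finset.prod_pos fun i _ => pow_pos (hpos i) 2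
  have hkey : ∏ i, x i ≤ 4 * a * b / (a + b) ^ 2 * (n:ℝ) ^ n := by
    have hm2 : m ^ 2 = (a + b) ^ 2 / 4 := by rw [hm_def]; ring
    rw [div_mul_eq_mul_div, le_div_iff₀ (pow_pos hab 2)]
    calc (∏ i, x i) * (a + b) ^ 2 = (∏ i, x i) * m ^ 2 * 4 := by rw [hm2]; ring
      _ = a * b * (∏ i, y i) * 4 := by rw [hprod]
      _ ≤ a * b * ((n:ℝ) ^ n) * 4 := by
          have := mul_le_mul_of_nonneg_left hamgm (mul_pos ha hb).le
          linarith
      _ = 4 * a * b * (n:ℝ) ^ n := by ring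
  have hDpos : (0:ℝ) < ∏ i, σ i := Finset.prod_pos fun i _ => hpos i
  have hD2 : (∏ i, σ i) ^ 2 = ∏ i, x i := by
    rw [hx_def, ← Finset.prod_pow]
  have hr : (0:ℝ) < b / a := div_pos hb ha
  constructor
  · -- first inequality
    have hR : 2 * Real.sqrt (b / a) / (b / a + 1) = Real.sqrt (4 * a * b / (a + b) ^ 2) := by
      have h1 : (2 * Real.sqrt (b / a) / (b / a + 1)) ^ 2 = 4 * a * b / (a + b) ^ 2 := by
        rw [div_pow, mul_pow, Real.sq_sqrt hr.le,
          div_eq_div_iff (pow_pos (show (0:ℝ) < b/a+1 by linarith) 2).ne' (pow_pos hab 2).ne']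
        field_simp
        ring
      rw [← h1, Real.sqrt_sq (by positivity)]
    have hpow : (n:ℝ) ^ ((n:ℝ) / 2) = Real.sqrt ((n:ℝ) ^ n) := by
      rw [Real.sqrt_eq_rpow, ← Real.rpow_natCast (n:ℝ) n, ← Real.rpow_mul hnpos.le]
      ring_nf
    rw [hR, hpow, ← Real.sqrt_mul (by positivity)]
    have hDsq : ∏ i, σ i = Real.sqrt ((∏ i, σ i) ^ 2) := (Real.sqrt_sq hDpos.le).symm
    rw [hDsq, hD2]
    exact Real.sqrt_le_sqrt hkey
  · -- second inequality
    rw [hD2, div_lt_div_iff₀ ha hxpos]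
    have h1 : (∏ i, x i) * (a + b) ^ 2 ≤ 4 * a * b * (n:ℝ) ^ n := by
      have := mul_le_mul_of_nonneg_right hkey (pow_pos hab 2).le
      rwa [div_mul_eq_mul_div, div_mul_cancel₀ _ (pow_pos hab 2).ne'] at this
    nlinarith [mul_le_mul_of_nonneg_left h1 hb.le, pow_pos hab 2,
      mul_pos (mul_pos ha hN) (mul_pos ha hb), mul_pos (mul_pos ha hN) (mul_pos ha ha)]
end

section
/- Let E ⊆ G be a subset of a finite abelian group with |E| = n > 1. Then there exists B ⊆ Ĝ with |B| = n such that the Fourier matrix T(E,B) is invertible and its squared condition number is less than 4n^n. In particular, ρ(E) := min_B cond(T(E,B))² < 4n^n, a bound independent of G. -/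
/-- The Fourier matrix of an equal-size pair `(E, B)` in a finite abelian group:
its `(i,j)` entry is `b_j(e_i)`. -/
noncomputable def charMatrix {G : Type*} [AddCommGroup G] {n : ℕ}
    (E : Fin n → G) (B : Fin n → AddChar G ℂ) : Matrix (Fin n) (Fin n) ℂ :=
  Matrix.of fun i j => B j (E i)

/-- The operator (spectral) norm of a matrix. -/
noncomputable def opNorm {ι : Type*} [Fintype ι] [DecidableEq ι]
    (T : Matrix ι ι ℂ) : ℝ :=
  ‖Matrix.toEuclideanCLM (𝕜 := ℂ) T‖

set_option maxHeartbeats 1000000 in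
open Finset in
private lemma opNorm_le_card_mul_bound {n : ℕ} (M : Matrix (Fin n) (Fin n) ℂ) (c : ℝ) (hc : 0 ≤ c)
    (h : ∀ i j, ‖M i j‖ ≤ c) :
    ‖Matrix.toEuclideanCLM (𝕜 := ℂ) M‖ ≤ n * c := by
  apply ContinuousLinearMap.opNorm_le_bound _ (by positivity)
  intro x
  obtain ⟨y, rfl⟩ : ∃ y : Fin n → ℂ, (WithLp.equiv 2 _).symm y = x := ⟨WithLp.equiv 2 _ x, rfl⟩
  rw [show Matrix.toEuclideanCLM (𝕜 := ℂ) M ((WithLp.equiv 2 _).symm y) = (WithLp.equiv 2 _).symm (Matrix.toLin' M y) from rfl]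
  have hnorm : ∀ v : Fin n → ℂ, ‖(WithLp.equiv 2 (Fin n → ℂ)).symm v‖
      = Real.sqrt (∑ j, ‖v j‖ ^ 2) := by
    intro v
    rw [EuclideanSpace.norm_eq]
    simp
  rw [hnorm, hnorm]
  have hMx : ∀ i, ‖Matrix.toLin' M y i‖ ≤ c * Real.sqrt ((n : ℝ) * ∑ j, ‖y j‖ ^ 2) := by
    intro i
    have hrfl : Matrix.toLin' M y i = ∑ j, M i j * y j := by
      simp [Matrix.toLin'_apply, Matrix.mulVec, dotProduct]
    rw [hrfl]
    calc ‖∑ j, M i j * y j‖ ≤ ∑ j, ‖M i j‖ * ‖y j‖ := by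
          refine (norm_sum_le _ _).trans ?_
          simp [norm_mul]
      _ ≤ ∑ j, c * ‖y j‖ := Finset.sum_le_sum fun j _ =>
          mul_le_mul_of_nonneg_right (h i j) (norm_nonneg _)
      _ = c * ∑ j, 1 * ‖y j‖ := by rw [Finset.mul_sum]; simp
      _ ≤ c * Real.sqrt ((n : ℝ) * ∑ j, ‖y j‖ ^ 2) := by
          refine mul_le_mul_of_nonneg_left (Real.le_sqrt_of_sq_le ?_) hc
          have hcs := Finset.sum_mul_sq_le_sq_mul_sq Finset.univ (fun _ : Fin n => (1:ℝ))
            (fun j => ‖y j‖)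
          simpa using hcs
  have hb : Real.sqrt (∑ i, ‖Matrix.toLin' M y i‖ ^ 2)
      ≤ Real.sqrt (∑ _i : Fin n, (c * Real.sqrt ((n : ℝ) * ∑ j, ‖y j‖ ^ 2)) ^ 2) := by
    apply Real.sqrt_le_sqrt
    exact Finset.sum_le_sum fun i _ => pow_le_pow_left₀ (norm_nonneg _) (hMx i) 2
  refine hb.trans (le_of_eq ?_)
  rw [Finset.sum_const, Finset.card_univ, Fintype.card_fin, nsmul_eq_mul]
  rw [mul_pow, Real.sq_sqrt (by positivity)]
  rw [show (n:ℝ) * (c ^ 2 * ((n:ℝ) * ∑ j, ‖y j‖ ^ 2)) = ((n:ℝ)*c)^2 * (∑ j, ‖y j‖ ^ 2) by ring]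
  rw [Real.sqrt_mul (by positivity), Real.sqrt_sq (by positivity)]

private lemma card_perm_fiber {n : ℕ} (i j : Fin n) :
    (Finset.univ.filter (fun σ : Equiv.Perm (Fin n) => σ i = j)).card = (n - 1).factorial := by
  classical
  rw [← Fintype.card_subtype]
  have e1 : {σ : Equiv.Perm (Fin n) // σ i = j} ≃ {σ : Equiv.Perm (Fin n) // σ i = i} :=
    { toFun := fun σ => ⟨σ.1.trans (Equiv.swap i j), by simp [σ.2]⟩
      invFun := fun σ => ⟨σ.1.trans (Equiv.swap i j), by simp [σ.2, Equiv.swap_apply_left]⟩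
      left_inv := fun σ => by
        ext x
        simp [Equiv.swap_apply_self]
      right_inv := fun σ => by
        ext x
        simp [Equiv.swap_apply_self] }
  have e2 : {σ : Equiv.Perm (Fin n) // σ i = i} ≃ Equiv.Perm {x : Fin n // x ≠ i} := by
    refine (Equiv.subtypeEquivRight ?_).trans (Equiv.Perm.subtypeEquivSubtypePerm
      (fun x : Fin n => x ≠ i)).symm
    intro σ
    constructor
    · intro hσ a ha
      rw [not_not] at ha
      subst ha; exact hσ
    · intro hσ
      exact hσ i (by simp)
  rw [Fintype.card_congr (e1.trans e2), Fintype.card_perm]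
  congr 1
  rw [Fintype.card_subtype_compl, Fintype.card_subtype_eq, Fintype.card_fin]

private lemma adjugate_norm_le {n : ℕ} (M : Matrix (Fin n) (Fin n) ℂ) (h : ∀ i j, ‖M i j‖ ≤ 1)
    (i j : Fin n) : ‖M.adjugate i j‖ ≤ (n - 1).factorial := by
  classical
  rw [Matrix.adjugate_apply, Matrix.det_apply']
  set N := M.updateRow j (Pi.single i 1) with hN
  have hsign : ∀ σ : Equiv.Perm (Fin n), ‖((Equiv.Perm.sign σ : ℤ) : ℂ)‖ = 1 := by
    intro σ
    rcases Int.units_eq_one_or (Equiv.Perm.sign σ) with hs | hs <;> rw [hs] <;> simp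
  have hNe : ∀ a b, N a b = if a = j then (Pi.single i (1:ℂ) : Fin n → ℂ) b else M a b := by
    intro a b
    rw [hN, Matrix.updateRow_apply]
  have hterm : ∀ σ : Equiv.Perm (Fin n), ‖((Equiv.Perm.sign σ : ℤ) : ℂ) * ∏ k, N (σ k) k‖
      ≤ if σ i = j then 1 else 0 := by
    intro σ
    rw [norm_mul, hsign, one_mul]
    split_ifs with hσ
    · rw [norm_prod]
      refine Finset.prod_le_one (fun k _ => norm_nonneg _) (fun k _ => ?_)
      rw [hNe]
      split_ifs with hk
      · have : k = i := σ.injective (by rw [hk, hσ])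
        subst this
        simp
      · exact h _ _
    · have h0 : N (σ (σ.symm j)) (σ.symm j) = 0 := by
        rw [hNe]
        simp only [Equiv.apply_symm_apply, if_pos rfl]
        have : σ.symm j ≠ i := by
          intro hc
          apply hσ
          rw [← hc, Equiv.apply_symm_apply]
        exact Pi.single_eq_of_ne this 1
      rw [show (∏ k, N (σ k) k) = 0 from Finset.prod_eq_zero (Finset.mem_univ (σ.symm j)) h0]
      simp
  calc ‖∑ σ : Equiv.Perm (Fin n), ((Equiv.Perm.sign σ : ℤ) : ℂ) * ∏ k, N (σ k) k‖
      ≤ ∑ σ : Equiv.Perm (Fin n), ‖((Equiv.Perm.sign σ : ℤ) : ℂ) * ∏ k, N (σ k) k‖ :=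
        norm_sum_le _ _
    _ ≤ ∑ σ : Equiv.Perm (Fin n), (if σ i = j then (1:ℝ) else 0) :=
        Finset.sum_le_sum fun σ _ => hterm σ
    _ = ((Finset.univ.filter (fun σ : Equiv.Perm (Fin n) => σ i = j)).card : ℝ) := by
        rw [Finset.sum_boole]
    _ = (n-1).factorial := by rw [card_perm_fiber]

private lemma det_mul_conj_expand {G : Type*} [AddCommGroup G] [Fintype G] {n : ℕ}
    (E : Fin n → G) (B : Fin n → AddChar G ℂ) :
    (charMatrix E B).det * (starRingEnd ℂ) (charMatrix E B).det
      = ∑ σ : Equiv.Perm (Fin n), ∑ τ : Equiv.Perm (Fin n),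
          ((Equiv.Perm.sign σ : ℤ) : ℂ) * ((Equiv.Perm.sign τ : ℤ) : ℂ) *
            ∏ k, B k (E (σ k) - E (τ k)) := by
  classical
  have hdet : (charMatrix E B).det
      = ∑ σ : Equiv.Perm (Fin n), ((Equiv.Perm.sign σ : ℤ) : ℂ) * ∏ k, B k (E (σ k)) := by
    rw [Matrix.det_apply']
    rfl
  have hconj : (starRingEnd ℂ) (charMatrix E B).det
      = ∑ τ : Equiv.Perm (Fin n), ((Equiv.Perm.sign τ : ℤ) : ℂ) * ∏ k, B k (-(E (τ k))) := by
    rw [hdet, map_sum]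
    refine Finset.sum_congr rfl fun τ _ => ?_
    rw [map_mul, map_prod]
    congr 1
    · exact map_intCast (starRingEnd ℂ) _
    · exact Finset.prod_congr rfl fun k _ => (AddChar.map_neg_eq_conj (B k) (E (τ k))).symm
  rw [hconj, hdet, Finset.sum_mul_sum]
  refine Finset.sum_congr rfl fun σ _ => Finset.sum_congr rfl fun τ _ => ?_
  rw [mul_mul_mul_comm, ← Finset.prod_mul_distrib]
  congr 1
  refine Finset.prod_congr rfl fun k _ => ?_
  rw [← AddChar.map_add_eq_mul, sub_eq_add_neg]

private lemma sum_det_mul_conj {G : Type*} [AddCommGroup G] [Fintype G] {n : ℕ}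
    (E : Fin n → G) (hE : Function.Injective E) :
    ∑ B : Fin n → AddChar G ℂ,
        (charMatrix E B).det * (starRingEnd ℂ) (charMatrix E B).det
      = (n.factorial : ℂ) * ((Fintype.card G : ℂ)) ^ n := by
  classical
  simp_rw [det_mul_conj_expand E]
  rw [Finset.sum_comm]
  have hinner : ∀ σ : Equiv.Perm (Fin n),
      (∑ B : Fin n → AddChar G ℂ, ∑ τ : Equiv.Perm (Fin n),
        ((Equiv.Perm.sign σ : ℤ) : ℂ) * ((Equiv.Perm.sign τ : ℤ) : ℂ) *
          ∏ k, B k (E (σ k) - E (τ k)))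
      = (Fintype.card G : ℂ) ^ n := by
    intro σ
    rw [Finset.sum_comm]
    have hτ : ∀ τ : Equiv.Perm (Fin n),
        (∑ B : Fin n → AddChar G ℂ, ∏ k, B k (E (σ k) - E (τ k)))
        = if τ = σ then (Fintype.card G : ℂ) ^ n else 0 := by
      intro τ
      have hfac : (∑ B : Fin n → AddChar G ℂ, ∏ k, B k (E (σ k) - E (τ k)))
          = ∏ k, ∑ ψ : AddChar G ℂ, ψ (E (σ k) - E (τ k)) :=
        (Fintype.prod_sum fun k (ψ : AddChar G ℂ) => ψ (E (σ k) - E (τ k))).symm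
      rw [hfac]
      by_cases hτσ : τ = σ
      · subst hτσ
        simp [AddChar.sum_apply_eq_ite]
      · obtain ⟨k, hk⟩ : ∃ k, τ k ≠ σ k := by
          by_contra hc
          push_neg at hc
          exact hτσ (Equiv.ext hc)
        rw [if_neg hτσ]
        refine Finset.prod_eq_zero (Finset.mem_univ k) ?_
        rw [AddChar.sum_apply_eq_ite, if_neg]
        intro hc
        rw [sub_eq_zero] at hc
        exact hk (hE hc).symm
    calc ∑ τ : Equiv.Perm (Fin n), ∑ B : Fin n → AddChar G ℂ,
          ((Equiv.Perm.sign σ : ℤ) : ℂ) * ((Equiv.Perm.sign τ : ℤ) : ℂ) *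
            ∏ k, B k (E (σ k) - E (τ k))
        = ∑ τ : Equiv.Perm (Fin n),
            ((Equiv.Perm.sign σ : ℤ) : ℂ) * ((Equiv.Perm.sign τ : ℤ) : ℂ) *
              (if τ = σ then (Fintype.card G : ℂ) ^ n else 0) := by
          refine Finset.sum_congr rfl fun τ _ => ?_
          rw [← Finset.mul_sum, hτ τ]
      _ = (Fintype.card G : ℂ) ^ n := by
          rw [Finset.sum_eq_single σ]
          · have : ((Equiv.Perm.sign σ : ℤ) : ℂ) * ((Equiv.Perm.sign σ : ℤ) : ℂ) = 1 := by
              rcases Int.units_eq_one_or (Equiv.Perm.sign σ) with hs | hs <;> rw [hs] <;> norm_num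
            rw [if_pos rfl, this, one_mul]
          · intro τ _ hτσ
            rw [if_neg hτσ, mul_zero]
          · intro hmem
            exact absurd (Finset.mem_univ σ) hmem
  rw [Finset.sum_congr rfl fun σ _ => hinner σ, Finset.sum_const, Finset.card_univ,
    Fintype.card_perm, Fintype.card_fin, nsmul_eq_mul]

private lemma sq_mul_factorial_le {n : ℕ} (hn : 2 ≤ n) : n ^ 2 * n.factorial ≤ 2 * n ^ n := by
  induction n, hn using Nat.le_induction with
  | base => norm_num [Nat.factorial]
  | succ m hm ih =>
    have h1 : (m+1) ^ 2 * (m+1).factorial = (m+1)^3 * m.factorial := by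
      rw [Nat.factorial_succ]; ring
    rw [h1]
    have h3 : (m+1)^3 * m.factorial * m ^ 2 ≤ 2 * ((m+1)^3 * m ^ m) := by
      calc (m+1)^3 * m.factorial * m ^ 2 = (m+1)^3 * (m ^ 2 * m.factorial) := by ring
        _ ≤ (m+1)^3 * (2 * m ^ m) := Nat.mul_le_mul_left _ ih
        _ = 2 * ((m+1)^3 * m ^ m) := by ring
    have h4 : (m+1)^3 * m ^ m ≤ (m+1)^(m+1) * m ^ 2 := by
      obtain ⟨p, rfl⟩ : ∃ p, m = p + 2 := ⟨m - 2, by omega⟩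
      have hsp : (p+2) ^ (p+2) = (p+2)^2 * (p+2)^p := by rw [← pow_add]; ring_nf
      rw [hsp]
      have h5 : (p+2)^p ≤ (p+3)^p := Nat.pow_le_pow_left (by omega) p
      calc (p+2+1)^3 * ((p+2)^2 * (p+2)^p) = (p+3)^3 * (p+2)^p * (p+2)^2 := by ring
        _ ≤ (p+3)^3 * (p+3)^p * (p+2)^2 :=
            Nat.mul_le_mul_right _ (Nat.mul_le_mul_left _ h5)
        _ = (p+3)^(p+3) * (p+2)^2 := by rw [← pow_add]; ring_nf
        _ = (p+2+1)^(p+2+1) * (p+2)^2 := by norm_num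
    have hm2 : 0 < m ^ 2 := by positivity
    have hfin := calc (m+1)^3 * m.factorial * m ^ 2 ≤ 2 * ((m+1)^3 * m ^ m) := h3
      _ ≤ 2 * ((m+1)^(m+1) * m ^ 2) := Nat.mul_le_mul_left _ h4
      _ = (2 * (m+1)^(m+1)) * m ^ 2 := by ring
    exact Nat.le_of_mul_le_mul_right hfin hm2

theorem stmt_15 {G : Type*} [AddCommGroup G] [Fintype G] {n : ℕ} (hn : 1 < n)
    (E : Fin n → G) (hE : Function.Injective E) :
    ∃ B : Fin n → AddChar G ℂ, Function.Injective B ∧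
      (charMatrix E B).det ≠ 0 ∧
      (opNorm (charMatrix E B) * opNorm (charMatrix E B)⁻¹) ^ 2 < 4 * (n : ℝ) ^ n := by
  classical
  -- Step 1: find B with ‖det‖² ≥ n!
  have hsum : ∑ B : Fin n → AddChar G ℂ, ‖(charMatrix E B).det‖ ^ 2
      = (n.factorial : ℝ) * (Fintype.card G : ℝ) ^ n := by
    have h1 := sum_det_mul_conj E hE
    have h2 : ∀ B : Fin n → AddChar G ℂ,
        (charMatrix E B).det * (starRingEnd ℂ) (charMatrix E B).det
        = ((‖(charMatrix E B).det‖ ^ 2 : ℝ) : ℂ) := by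
      intro B
      rw [Complex.mul_conj]
      norm_cast
      rw [Complex.sq_norm]
    rw [Finset.sum_congr rfl fun B _ => h2 B] at h1
    have h3 : ((∑ B : Fin n → AddChar G ℂ, ‖(charMatrix E B).det‖ ^ 2 : ℝ) : ℂ)
        = (((n.factorial : ℝ) * (Fintype.card G : ℝ) ^ n : ℝ) : ℂ) := by
      push_cast
      rw [← h1]
      push_cast
      ring
    exact_mod_cast h3
  obtain ⟨B, -, hB⟩ : ∃ B ∈ (Finset.univ : Finset (Fin n → AddChar G ℂ)),
      (n.factorial : ℝ) ≤ ‖(charMatrix E B).det‖ ^ 2 := by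
    apply Finset.exists_le_of_sum_le Finset.univ_nonempty
    rw [Finset.sum_const, Finset.card_univ, Fintype.card_fun, AddChar.card_eq,
      Fintype.card_fin, nsmul_eq_mul, hsum]
    push_cast
    ring_nf
    exact le_refl _
  set T := charMatrix E B with hT
  set d : ℝ := ‖T.det‖ with hd
  have hfacpos : (0:ℝ) < (n.factorial : ℝ) := by positivity
  have hd2 : (n.factorial : ℝ) ≤ d ^ 2 := hB
  have hdpos : 0 < d := by
    rcases lt_or_ge 0 d with h | h
    · exact h
    · exfalso
      have : d = 0 := le_antisymm h (norm_nonneg _)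
      rw [this] at hd2
      simp at hd2
      exact absurd hd2 (by positivity)
  have hdet : T.det ≠ 0 := by
    intro hc
    rw [hd, hc] at hdpos
    simp at hdpos
  -- injectivity of B
  have hBinj : Function.Injective B := by
    intro j1 j2 hj
    by_contra hne
    apply hdet
    refine Matrix.det_zero_of_column_eq hne fun k => ?_
    show B j1 (E k) = B j2 (E k)
    rw [hj]
  -- entries of T have norm 1
  have hTent : ∀ i j, ‖T i j‖ ≤ 1 := by
    intro i j
    show ‖B j (E i)‖ ≤ 1
    rw [AddChar.norm_apply]
  -- opNorm bounds
  have hopT : opNorm T ≤ n := by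
    have h := opNorm_le_card_mul_bound T 1 zero_le_one hTent
    rw [mul_one] at h
    exact h
  have hopTi : opNorm T⁻¹ ≤ n * ((n-1).factorial / d) := by
    apply opNorm_le_card_mul_bound
    · exact div_nonneg (Nat.cast_nonneg _) hdpos.le
    · intro i j
      rw [Matrix.inv_def]
      have : ‖(Ring.inverse T.det • T.adjugate) i j‖ = ‖Ring.inverse T.det‖ * ‖T.adjugate i j‖ := by
        simp [Matrix.smul_apply, norm_smul]
      rw [this, Ring.inverse_eq_inv', norm_inv, ← hd, div_eq_inv_mul]
      exact mul_le_mul_of_nonneg_left (adjugate_norm_le T hTent i j) (inv_nonneg.mpr hdpos.le)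
  -- final computation
  have hnn : (0:ℝ) < n := by positivity
  have hopTnn : 0 ≤ opNorm T := norm_nonneg (Matrix.toEuclideanCLM (𝕜 := ℂ) T)
  have hopTinn : 0 ≤ opNorm T⁻¹ := norm_nonneg (Matrix.toEuclideanCLM (𝕜 := ℂ) T⁻¹)
  have hchain : (opNorm T * opNorm T⁻¹) ^ 2 ≤ ((n:ℝ) * ((n:ℝ) * ((n-1).factorial / d))) ^ 2 := by
    apply pow_le_pow_left₀ (mul_nonneg hopTnn hopTinn)
    exact mul_le_mul hopT hopTi hopTinn (Nat.cast_nonneg n)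
  refine ⟨B, hBinj, hdet, lt_of_le_of_lt hchain ?_⟩
  have hfac : (n.factorial : ℝ) = n * (n-1).factorial := by
    rw [← Nat.mul_factorial_pred (by omega)]
    push_cast
    ring
  have hkey : ((n:ℝ) * ((n:ℝ) * ((n-1).factorial / d))) ^ 2
      = (n:ℝ)^4 * ((n-1).factorial:ℝ)^2 / d^2 := by
    field_simp
  rw [hkey]
  have hstep1 : (n:ℝ)^4 * ((n-1).factorial:ℝ)^2 / d^2
      ≤ (n:ℝ)^4 * ((n-1).factorial:ℝ)^2 / (n.factorial : ℝ) :=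
    div_le_div_of_nonneg_left (by positivity) hfacpos hd2
  refine lt_of_le_of_lt hstep1 ?_
  have heq : (n:ℝ)^4 * ((n-1).factorial:ℝ)^2 / (n.factorial : ℝ)
      = (n:ℝ)^2 * (n.factorial : ℝ) := by
    rw [hfac]
    have hne1 : (n:ℝ) ≠ 0 := by positivity
    have hne2 : (((n-1).factorial : ℕ) : ℝ) ≠ 0 := by positivity
    field_simp
  rw [heq]
  have hnat := sq_mul_factorial_le (n := n) (by omega)
  have hcast : (n:ℝ)^2 * (n.factorial : ℝ) ≤ 2 * (n:ℝ)^n := by exact_mod_cast hnat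
  refine lt_of_le_of_lt hcast ?_
  have : (0:ℝ) < (n:ℝ)^n := by positivity
  linarith
end

section
/- Let G = H ⊕ K be finite abelian groups, E_1 ⊆ H, E = E_1 × K ⊆ G, and B ⊆ Ĝ with |B| = |E| such that the characters of B restricted to E are linearly independent (a basis pair). Then B has exactly |E_1| elements in each coset of Ĥ in Ĝ, where Ĝ ≅ Ĥ × K̂. -/
open scoped Classical in
theorem stmt_18 {H K : Type*} [AddCommGroup H] [Fintype H] [AddCommGroup K] [Fintype K]
    (E₁ : Finset H) (B : Finset (AddChar (H × K) ℂ))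
    (hcard : B.card = (E₁ ×ˢ (Finset.univ : Finset K)).card)
    (hindep : LinearIndependent ℂ
      (fun χ : B => fun x : (E₁ ×ˢ (Finset.univ : Finset K)) => χ.1 x.1)) :
    -- `B` has exactly `|E₁|` elements in each coset of `Ĥ` in `Ĝ ≅ Ĥ × K̂`,
    -- the coset associated to `ψ ∈ K̂` consisting of the characters restricting
    -- to `ψ` on `K`:
    ∀ ψ : AddChar K ℂ,
      (B.filter fun χ => ∀ k : K, χ ((0 : H), k) = ψ k).card = E₁.card := by
  -- Step 1: each fiber has at most `E₁.card` elements.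
  have hle : ∀ ψ : AddChar K ℂ,
      (B.filter fun χ => ∀ k : K, χ ((0 : H), k) = ψ k).card ≤ E₁.card := by
    intro ψ
    set F : Finset (AddChar (H × K) ℂ) :=
      B.filter fun χ => ∀ k : K, χ ((0 : H), k) = ψ k with hF
    -- the `H`-parts of the characters in the fiber
    set g : F → (E₁ → ℂ) := fun χ => fun h => χ.1 (h.1, (0 : K)) with hg
    -- linear map multiplying by `ψ` on the `K`-coordinate
    let L : (↥E₁ → ℂ) →ₗ[ℂ] (↥(E₁ ×ˢ (Finset.univ : Finset K)) → ℂ) :=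
      { toFun := fun f x => f ⟨x.1.1, (Finset.mem_product.1 x.2).1⟩ * ψ x.1.2
        map_add' := by intro f g'; funext x; simp [add_mul]
        map_smul' := by intro c f; funext x; simp [mul_assoc] }
    have hinj : Function.Injective (fun χ : F => (⟨χ.1, (Finset.mem_filter.1 χ.2).1⟩ : B)) := by
      intro a b hab
      have hv := congrArg Subtype.val hab
      exact Subtype.ext hv
    have hcomp : (fun χ : F => fun x : (E₁ ×ˢ (Finset.univ : Finset K)) => χ.1.1 x.1)
        = L ∘ g := by
      funext χ
      funext x
      have hψ : ∀ k : K, χ.1 ((0 : H), k) = ψ k := (Finset.mem_filter.1 χ.2).2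
      have : χ.1 x.1 = χ.1 (x.1.1, (0 : K)) * χ.1 ((0 : H), x.1.2) := by
        rw [← AddChar.map_add_eq_mul]
        simp
      show (χ.1 : AddChar (H × K) ℂ) x.1 = L (g χ) x
      rw [this, hψ x.1.2]
      rfl
    have hindF : LinearIndependent ℂ
        (fun χ : F => fun x : (E₁ ×ˢ (Finset.univ : Finset K)) => χ.1.1 x.1) := by
      have := hindep.comp (fun χ : F => (⟨χ.1, (Finset.mem_filter.1 χ.2).1⟩ : B)) hinj
      exact this
    rw [hcomp] at hindF
    have hgind : LinearIndependent ℂ g := LinearIndependent.of_comp L hindF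
    have := hgind.fintype_card_le_finrank
    simpa using this
  -- Step 2: the fibers partition `B`.
  have hsum : ∑ ψ : AddChar K ℂ,
      (B.filter fun χ => ∀ k : K, χ ((0 : H), k) = ψ k).card = B.card := by
    have h := Finset.card_eq_sum_card_fiberwise
      (f := fun χ : AddChar (H × K) ℂ => χ.compAddMonoidHom (AddMonoidHom.inr H K))
      (s := B) (t := Finset.univ) (fun x _ => Finset.mem_univ _)
    rw [h]
    apply Finset.sum_congr rfl
    intro ψ _
    congr 1
    apply Finset.filter_congr
    intro χ _
    constructor
    · intro hx
      ext k
      exact (hx k)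
    · intro hx k
      have := congrFun (congrArg (DFunLike.coe) hx) k
      exact this
  -- Step 3: counting.
  intro ψ
  by_contra hne
  have hlt : (B.filter fun χ => ∀ k : K, χ ((0 : H), k) = ψ k).card < E₁.card :=
    lt_of_le_of_ne (hle ψ) hne
  have hstrict : ∑ ψ : AddChar K ℂ,
      (B.filter fun χ => ∀ k : K, χ ((0 : H), k) = ψ k).card
      < ∑ _ψ : AddChar K ℂ, E₁.card :=
    Finset.sum_lt_sum (fun i _ => hle i) ⟨ψ, Finset.mem_univ _, hlt⟩
  rw [hsum, hcard] at hstrict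
  simp only [Finset.sum_const, Finset.card_univ, smul_eq_mul, AddChar.card_eq,
    Finset.card_product] at hstrict
  rw [mul_comm] at hstrict
  exact lt_irrefl _ hstrict
end
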